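/- Let n ≥ 1 and let λ = (λ_1 ≥ λ_2 ≥ … ≥ λ_n ≥ 0) be a partition with at most n parts. Then, in ℤ[x_1,…,x_n], the Schur polynomial satisfies the Jacobi–Trudi identity S_λ(x_1,…,x_n) = det(h_{λ_i + j − i})_{1≤i,j≤n}. -/

import Mathlib

/-- `T` is a semistandard Young tableau of shape `lam` (a partition with at most `n` parts,
rows and entries 0-indexed): rows weakly increase and columns strictly increase. -/
def IsSSYT {n : ℕ} (lam : Fin n → ℕ) (T : ∀ i : Fin n, Fin (lam i) → Fin n) : Prop :=
  (∀ (i : Fin n) (j j' : Fin (lam i)), j ≤ j' → T i j ≤ T i j') ∧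
  (∀ (i i' : Fin n) (j : Fin (lam i)) (j' : Fin (lam i')),
    i < i' → (j : ℕ) = (j' : ℕ) → T i j < T i' j')

open MvPolynomial in
/-- The Schur polynomial `S_λ(x_1,…,x_n) = Σ_T x^T`, the sum over all semistandard Young
tableaux of shape `λ` with entries in `{1,…,n}`. -/
noncomputable def schurPoly (n : ℕ) (lam : Fin n → ℕ) : MvPolynomial (Fin n) ℤ :=
  ∑ᶠ T : {T : ∀ i : Fin n, Fin (lam i) → Fin n // IsSSYT lam T},
    ∏ i : Fin n, ∏ j : Fin (lam i), X (T.1 i j)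

open MvPolynomial in
/-- The complete homogeneous symmetric polynomial `h_k(x_1,…,x_n)`: the sum of all
monomials of degree `k`; by convention `h_k = 0` for `k < 0` (index taken in `ℤ`). -/
noncomputable def completeHomog (n : ℕ) (k : ℤ) : MvPolynomial (Fin n) ℤ :=
  if 0 ≤ k then
    ∑ᶠ d : {d : Fin n → ℕ // ∑ i, d i = k.toNat}, ∏ i : Fin n, X i ^ d.1 i
  else 0


namespace JT
open Finset MvPolynomial

variable {n : ℕ}

/-! ### partial sums and path coordinates -/

def Np (d : Fin n → ℕ) (t : ℕ) : ℕ :=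
  ∑ s ∈ univ.filter (fun s : Fin n => (s : ℕ) < t), d s

lemma Np_zero (d : Fin n → ℕ) : Np d 0 = 0 := by simp [Np]

lemma Np_succ (d : Fin n → ℕ) (t : ℕ) :
    Np d (t + 1) = Np d t + (if h : t < n then d ⟨t, h⟩ else 0) := by
  by_cases h : t < n
  · rw [dif_pos h, Np, Np,
      show (univ.filter (fun s : Fin n => (s : ℕ) < t + 1))
        = insert (⟨t, h⟩ : Fin n) (univ.filter (fun s : Fin n => (s : ℕ) < t)) from ?_,
      sum_insert (by simp), add_comm]
    ext s
    simp only [mem_insert, mem_filter, mem_univ, true_and, Fin.ext_iff]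
    omega
  · rw [dif_neg h, add_zero, Np, Np]
    congr 1
    ext s
    simp only [mem_filter, mem_univ, true_and]
    have := s.isLt; omega

lemma Np_mono (d : Fin n → ℕ) {t t' : ℕ} (h : t ≤ t') : Np d t ≤ Np d t' := by
  apply sum_le_sum_of_subset
  intro s hs
  simp only [mem_filter, mem_univ, true_and] at hs ⊢
  omega

lemma Np_total (d : Fin n → ℕ) {t : ℕ} (h : n ≤ t) : Np d t = ∑ s, d s := by
  rw [Np, filter_true_of_mem (fun s _ => lt_of_lt_of_le s.isLt h)]

lemma Np_fin_succ (d : Fin n → ℕ) (s : Fin n) :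
    Np d ((s : ℕ) + 1) = Np d s + d s := by
  rw [Np_succ, dif_pos s.isLt, Fin.eta]

/-- x-coordinate of path `i` at height `t`. -/
def Xf (D : Fin n → Fin n → ℕ) (i : Fin n) (t : ℕ) : ℕ :=
  (n - 1 - (i : ℕ)) + Np (D i) t

lemma Xf_mono (D : Fin n → Fin n → ℕ) (i : Fin n) {t t' : ℕ} (h : t ≤ t') :
    Xf D i t ≤ Xf D i t' := by
  exact Nat.add_le_add_left (Np_mono _ h) _

/-- the lattice point `(x, t)` lies on path `i`. -/
def onP (D : Fin n → Fin n → ℕ) (i : Fin n) (t x : ℕ) : Prop :=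
  Xf D i (t - 1) ≤ x ∧ x ≤ Xf D i t

/-- `(x,t)` lies on at least two paths. -/
def isMult (D : Fin n → Fin n → ℕ) (t x : ℕ) : Prop :=
  1 ≤ t ∧ t ≤ n ∧ ∃ i j : Fin n, i ≠ j ∧ onP D i t x ∧ onP D j t x

def Bad (D : Fin n → Fin n → ℕ) : Prop := ∃ t x, isMult D t x

noncomputable def t0 (D : Fin n → Fin n → ℕ) : ℕ := sInf {t | ∃ x, isMult D t x}

noncomputable def x0 (D : Fin n → Fin n → ℕ) : ℕ := sInf {x | isMult D (t0 D) x}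

noncomputable def i0 (D : Fin n → Fin n → ℕ) : ℕ :=
  sInf {k : ℕ | ∃ hk : k < n, onP D ⟨k, hk⟩ (t0 D) (x0 D)}

noncomputable def j0 (D : Fin n → Fin n → ℕ) : ℕ :=
  sInf {k : ℕ | ∃ hk : k < n, k ≠ i0 D ∧ onP D ⟨k, hk⟩ (t0 D) (x0 D)}

noncomputable def i0F [NeZero n] (D : Fin n → Fin n → ℕ) : Fin n :=
  if h : i0 D < n then ⟨i0 D, h⟩ else default

noncomputable def j0F [NeZero n] (D : Fin n → Fin n → ℕ) : Fin n :=
  if h : j0 D < n then ⟨j0 D, h⟩ else default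

/-- the new row at position `a`, taking the tail of row `b` from height `t0` on. -/
noncomputable def nrow (D : Fin n → Fin n → ℕ) (a b : Fin n) (s : Fin n) : ℕ :=
  if (s : ℕ) + 1 < t0 D then D a s
  else if (s : ℕ) + 1 = t0 D then Xf D b (t0 D) - Xf D a (t0 D - 1)
  else D b s

noncomputable def Dsw [NeZero n] (D : Fin n → Fin n → ℕ) : Fin n → Fin n → ℕ := fun k =>
  if k = i0F D then nrow D (i0F D) (j0F D)
  else if k = j0F D then nrow D (j0F D) (i0F D)
  else D k

lemma bad_pack [NeZero n] {D : Fin n → Fin n → ℕ} (hB : Bad D) :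
    1 ≤ t0 D ∧ t0 D ≤ n ∧ ((i0F D : ℕ) = i0 D) ∧ ((j0F D : ℕ) = j0 D) ∧
      i0F D ≠ j0F D ∧ onP D (i0F D) (t0 D) (x0 D) ∧ onP D (j0F D) (t0 D) (x0 D) := by
  have h1 : ∃ x, isMult D (t0 D) x := by
    obtain ⟨t, x, h⟩ := hB
    exact Nat.sInf_mem (⟨t, x, h⟩ : Set.Nonempty {t | ∃ x, isMult D t x})
  have h2 : isMult D (t0 D) (x0 D) := Nat.sInf_mem h1
  obtain ⟨ht1, htn, i, j, hij, hi, hj⟩ := h2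
  have hne1 : {k : ℕ | ∃ hk : k < n, onP D ⟨k, hk⟩ (t0 D) (x0 D)}.Nonempty :=
    ⟨(i : ℕ), i.isLt, by simpa using hi⟩
  obtain ⟨hi0n, hi0on⟩ := Nat.sInf_mem hne1
  have hvij : (i : ℕ) ≠ (j : ℕ) := fun h => hij (Fin.ext h)
  have hne2 : {k : ℕ | ∃ hk : k < n, k ≠ i0 D ∧ onP D ⟨k, hk⟩ (t0 D) (x0 D)}.Nonempty := by
    rcases eq_or_ne (i : ℕ) (i0 D) with h | h
    · exact ⟨(j : ℕ), j.isLt, by omega, by simpa using hj⟩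
    · exact ⟨(i : ℕ), i.isLt, h, by simpa using hi⟩
  obtain ⟨hj0n, hj0ne, hj0on⟩ := Nat.sInf_mem hne2
  have hiF : i0F D = ⟨i0 D, hi0n⟩ := dif_pos hi0n
  have hjF : j0F D = ⟨j0 D, hj0n⟩ := dif_pos hj0n
  refine ⟨ht1, htn, by rw [hiF], by rw [hjF], ?_, ?_, ?_⟩
  · rw [hiF, hjF]; intro h; exact hj0ne (congrArg Fin.val h).symm
  · rw [hiF]; exact hi0on
  · rw [hjF]; exact hj0on

section swap
variable [NeZero n] {D : Fin n → Fin n → ℕ}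

lemma Dsw_a (D : Fin n → Fin n → ℕ) : Dsw D (i0F D) = nrow D (i0F D) (j0F D) := by
  simp [Dsw]

lemma Dsw_b (hB : Bad D) : Dsw D (j0F D) = nrow D (j0F D) (i0F D) := by
  have h := (bad_pack hB).2.2.2.2.1
  simp [Dsw, h.symm, Ne.symm h]

lemma Dsw_other {k : Fin n} (hka : k ≠ i0F D) (hkb : k ≠ j0F D) : Dsw D k = D k := by
  simp [Dsw, hka, hkb]

lemma Xf_other {k : Fin n} (hka : k ≠ i0F D) (hkb : k ≠ j0F D) (t : ℕ) :
    Xf (Dsw D) k t = Xf D k t := by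
  rw [Xf, Xf, Dsw_other hka hkb]

/-- generic one-row tail swap computation -/
lemma Xsw_row (hB : Bad D) (a b : Fin n) (hrow : Dsw D a = nrow D a b)
    (hkey : Xf D a (t0 D - 1) ≤ x0 D ∧ x0 D ≤ Xf D b (t0 D)) (t : ℕ) :
    Xf (Dsw D) a t = if t < t0 D then Xf D a t else Xf D b t := by
  obtain ⟨ht1, htn, -, -, -, -, -⟩ := bad_pack hB
  induction t with
  | zero =>
    rw [if_pos (by omega)]
    rw [Xf, Xf, Np_zero, Np_zero]
  | succ t ih =>
    have hstep : Xf (Dsw D) a (t + 1)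
        = Xf (Dsw D) a t + (if h : t < n then nrow D a b ⟨t, h⟩ else 0) := by
      rw [Xf, Xf, Np_succ, hrow, add_assoc]
    have hstepa : Xf D a (t + 1) = Xf D a t + (if h : t < n then D a ⟨t, h⟩ else 0) := by
      rw [Xf, Xf, Np_succ, add_assoc]
    have hstepb : Xf D b (t + 1) = Xf D b t + (if h : t < n then D b ⟨t, h⟩ else 0) := by
      rw [Xf, Xf, Np_succ, add_assoc]
    rcases lt_trichotomy (t + 1) (t0 D) with hc | hc | hc
    · have htn' : t < n := by omega
      rw [if_pos hc, hstep, dif_pos htn', ih, if_pos (by omega), hstepa, dif_pos htn']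
      congr 1
      rw [nrow, if_pos (by simpa using hc)]
    · have htn' : t < n := by omega
      rw [if_neg (by omega), hstep, dif_pos htn', ih, if_pos (by omega)]
      have hnr : nrow D a b ⟨t, htn'⟩ = Xf D b (t0 D) - Xf D a (t0 D - 1) := by
        rw [nrow, if_neg (by simp; omega), if_pos (by simpa using hc)]
      rw [hnr]
      have h1 : Xf D a (t0 D - 1) ≤ Xf D b (t0 D) := le_trans hkey.1 hkey.2
      have h2 : t = t0 D - 1 := by omega
      rw [h2, show t0 D - 1 + 1 = t0 D from by omega]
      omega
    · rw [if_neg (by omega), hstep, ih, if_neg (by omega), hstepb]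
      by_cases htn' : t < n
      · rw [dif_pos htn', dif_pos htn']
        congr 1
        rw [nrow, if_neg (by simp; omega), if_neg (by simp; omega)]
      · rw [dif_neg htn', dif_neg htn']

lemma Xsw_a (hB : Bad D) (t : ℕ) :
    Xf (Dsw D) (i0F D) t = if t < t0 D then Xf D (i0F D) t else Xf D (j0F D) t := by
  obtain ⟨-, -, -, -, -, ha, hb⟩ := bad_pack hB
  exact Xsw_row hB _ _ (Dsw_a D) ⟨ha.1, hb.2⟩ t

lemma Xsw_b (hB : Bad D) (t : ℕ) :
    Xf (Dsw D) (j0F D) t = if t < t0 D then Xf D (j0F D) t else Xf D (i0F D) t := by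
  obtain ⟨-, -, -, -, -, ha, hb⟩ := bad_pack hB
  exact Xsw_row hB _ _ (Dsw_b hB) ⟨hb.1, ha.2⟩ t

lemma onP_other {k : Fin n} (hka : k ≠ i0F D) (hkb : k ≠ j0F D) (t x : ℕ) :
    onP (Dsw D) k t x ↔ onP D k t x := by
  rw [onP, onP, Xf_other hka hkb, Xf_other hka hkb]

lemma onP_sw (hB : Bad D) (t x : ℕ) :
    ((onP (Dsw D) (i0F D) t x ∨ onP (Dsw D) (j0F D) t x) ↔
      (onP D (i0F D) t x ∨ onP D (j0F D) t x)) ∧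
    ((onP (Dsw D) (i0F D) t x ∧ onP (Dsw D) (j0F D) t x) ↔
      (onP D (i0F D) t x ∧ onP D (j0F D) t x)) := by
  obtain ⟨ht1, htn, -, -, hab, ha, hb⟩ := bad_pack hB
  obtain ⟨ha1, ha2⟩ := ha
  obtain ⟨hb1, hb2⟩ := hb
  rcases lt_trichotomy t (t0 D) with hc | hc | hc
  · simp only [onP, Xsw_a hB, Xsw_b hB, if_pos hc, if_pos (show t - 1 < t0 D by omega)]
    tauto
  · subst hc
    simp only [onP, Xsw_a hB, Xsw_b hB, if_pos (show t0 D - 1 < t0 D by omega),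
      if_neg (lt_irrefl (t0 D))]
    omega
  · simp only [onP, Xsw_a hB, Xsw_b hB, if_neg (show ¬(t - 1 < t0 D) by omega),
      if_neg (show ¬(t < t0 D) by omega)]
    tauto

private lemma pair_transfer {E F : Fin n → Fin n → ℕ} {a b : Fin n} (hab : a ≠ b) {t x : ℕ}
    (hoth : ∀ k : Fin n, k ≠ a → k ≠ b → (onP E k t x ↔ onP F k t x))
    (hor : onP E a t x ∨ onP E b t x → onP F a t x ∨ onP F b t x)
    (hand : onP E a t x → onP E b t x → onP F a t x ∧ onP F b t x) :
    (∃ i j : Fin n, i ≠ j ∧ onP E i t x ∧ onP E j t x) →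
    (∃ i j : Fin n, i ≠ j ∧ onP F i t x ∧ onP F j t x) := by
  rintro ⟨i, j, hij, hi, hj⟩
  by_cases hia : i = a
  · by_cases hjb : j = b
    · obtain ⟨h1, h2⟩ := hand (hia ▸ hi) (hjb ▸ hj)
      exact ⟨a, b, hab, h1, h2⟩
    · have hja : j ≠ a := fun h => hij (by rw [hia, h])
      rcases hor (Or.inl (hia ▸ hi)) with hc | hc
      · exact ⟨a, j, Ne.symm hja, hc, (hoth j hja hjb).1 hj⟩
      · exact ⟨b, j, Ne.symm hjb, hc, (hoth j hja hjb).1 hj⟩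
  · by_cases hib : i = b
    · by_cases hja : j = a
      · obtain ⟨h1, h2⟩ := hand (hja ▸ hj) (hib ▸ hi)
        exact ⟨a, b, hab, h1, h2⟩
      · by_cases hjb : j = b
        · exact (hij (by rw [hib, hjb])).elim
        · rcases hor (Or.inr (hib ▸ hi)) with hc | hc
          · exact ⟨a, j, Ne.symm hja, hc, (hoth j hja hjb).1 hj⟩
          · exact ⟨b, j, Ne.symm hjb, hc, (hoth j hja hjb).1 hj⟩
    · by_cases hja : j = a
      · rcases hor (Or.inl (hja ▸ hj)) with hc | hc
        · exact ⟨i, a, hia, (hoth i hia hib).1 hi, hc⟩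
        · exact ⟨i, b, hib, (hoth i hia hib).1 hi, hc⟩
      · by_cases hjb : j = b
        · rcases hor (Or.inr (hjb ▸ hj)) with hc | hc
          · exact ⟨i, a, hia, (hoth i hia hib).1 hi, hc⟩
          · exact ⟨i, b, hib, (hoth i hia hib).1 hi, hc⟩
        · exact ⟨i, j, hij, (hoth i hia hib).1 hi, (hoth j hja hjb).1 hj⟩

lemma isMult_sw (hB : Bad D) (t x : ℕ) : isMult (Dsw D) t x ↔ isMult D t x := by
  obtain ⟨-, -, -, -, hab, -, -⟩ := bad_pack hB
  constructor <;> rintro ⟨h1, h2, hex⟩ <;> refine ⟨h1, h2, ?_⟩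
  · exact pair_transfer hab (fun k hka hkb => onP_other hka hkb t x)
      (onP_sw hB t x).1.mp (fun u v => (onP_sw hB t x).2.mp ⟨u, v⟩) hex
  · exact pair_transfer hab (fun k hka hkb => (onP_other hka hkb t x).symm)
      (onP_sw hB t x).1.mpr (fun u v => (onP_sw hB t x).2.mpr ⟨u, v⟩) hex

lemma Bad_sw (hB : Bad D) : Bad (Dsw D) := by
  obtain ⟨t, x, h⟩ := id hB
  exact ⟨t, x, (isMult_sw hB t x).2 h⟩

lemma t0_sw (hB : Bad D) : t0 (Dsw D) = t0 D := by
  unfold t0; congr 1; ext t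
  simp only [Set.mem_setOf_eq]
  exact exists_congr fun x => isMult_sw hB t x

lemma x0_sw (hB : Bad D) : x0 (Dsw D) = x0 D := by
  unfold x0; rw [t0_sw hB]; congr 1; ext x
  exact isMult_sw hB (t0 D) x

lemma onP_sw_pt_a (hB : Bad D) : onP (Dsw D) (i0F D) (t0 D) (x0 D) := by
  obtain ⟨ht1, htn, -, -, hab, ha, hb⟩ := bad_pack hB
  constructor
  · rw [Xsw_a hB, if_pos (by omega)]; exact ha.1
  · rw [Xsw_a hB, if_neg (lt_irrefl _)]; exact hb.2

lemma onP_sw_pt_b (hB : Bad D) : onP (Dsw D) (j0F D) (t0 D) (x0 D) := by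
  obtain ⟨ht1, htn, -, -, hab, ha, hb⟩ := bad_pack hB
  constructor
  · rw [Xsw_b hB, if_pos (by omega)]; exact hb.1
  · rw [Xsw_b hB, if_neg (lt_irrefl _)]; exact ha.2

lemma onP_pt_iff (hB : Bad D) (k : Fin n) :
    onP (Dsw D) k (t0 D) (x0 D) ↔ onP D k (t0 D) (x0 D) := by
  obtain ⟨ht1, htn, -, -, hab, ha, hb⟩ := bad_pack hB
  by_cases hka : k = i0F D
  · subst hka; exact ⟨fun _ => ha, fun _ => onP_sw_pt_a hB⟩
  · by_cases hkb : k = j0F D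
    · subst hkb; exact ⟨fun _ => hb, fun _ => onP_sw_pt_b hB⟩
    · exact onP_other hka hkb _ _

lemma i0_sw (hB : Bad D) : i0 (Dsw D) = i0 D := by
  unfold i0; rw [t0_sw hB, x0_sw hB]; congr 1; ext k
  simp only [Set.mem_setOf_eq]
  exact exists_congr fun hk => onP_pt_iff hB ⟨k, hk⟩

lemma j0_sw (hB : Bad D) : j0 (Dsw D) = j0 D := by
  unfold j0; rw [t0_sw hB, x0_sw hB, i0_sw hB]; congr 1; ext k
  simp only [Set.mem_setOf_eq]
  exact exists_congr fun hk => and_congr_right fun _ => onP_pt_iff hB ⟨k, hk⟩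

lemma i0F_sw (hB : Bad D) : i0F (Dsw D) = i0F D := by
  unfold i0F; rw [i0_sw hB]

lemma j0F_sw (hB : Bad D) : j0F (Dsw D) = j0F D := by
  unfold j0F; rw [j0_sw hB]

lemma nrow_sw_row (hB : Bad D) (a b : Fin n)
    (hXa : ∀ t, Xf (Dsw D) a t = if t < t0 D then Xf D a t else Xf D b t)
    (hXb : ∀ t, Xf (Dsw D) b t = if t < t0 D then Xf D b t else Xf D a t)
    (hrowa : Dsw D a = nrow D a b) (hrowb : Dsw D b = nrow D b a) (s : Fin n) :
    nrow (Dsw D) a b s = D a s := by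
  obtain ⟨ht1, htn, -, -, hab, ha, hb⟩ := bad_pack hB
  rw [nrow, t0_sw hB]
  rcases lt_trichotomy ((s : ℕ) + 1) (t0 D) with hc | hc | hc
  · rw [if_pos hc, hrowa, nrow, if_pos hc]
  · rw [if_neg (by omega), if_pos hc, hXb (t0 D), hXa (t0 D - 1),
      if_neg (lt_irrefl _), if_pos (by omega)]
    have hsval : (s : ℕ) = t0 D - 1 := by omega
    have hnp : Np (D a) ((s : ℕ) + 1) = Np (D a) (s : ℕ) + D a s := Np_fin_succ _ s
    rw [hsval, show t0 D - 1 + 1 = t0 D from by omega] at hnp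
    rw [Xf, Xf]
    omega
  · rw [if_neg (by omega), if_neg (by omega), hrowb, nrow, if_neg (by omega), if_neg (by omega)]

lemma Dsw_invol (hB : Bad D) : Dsw (Dsw D) = D := by
  obtain ⟨ht1, htn, -, -, hab, ha, hb⟩ := bad_pack hB
  funext k
  by_cases hka : k = i0F D
  · subst hka
    rw [show Dsw (Dsw D) (i0F D) = nrow (Dsw D) (i0F D) (j0F D) from ?_]
    · funext s
      exact nrow_sw_row hB _ _ (Xsw_a hB) (Xsw_b hB) (Dsw_a D) (Dsw_b hB) s
    · conv_lhs => rw [show (i0F D) = i0F (Dsw D) from (i0F_sw hB).symm]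
      rw [Dsw_a (Dsw D), i0F_sw hB, j0F_sw hB]
  · by_cases hkb : k = j0F D
    · subst hkb
      rw [show Dsw (Dsw D) (j0F D) = nrow (Dsw D) (j0F D) (i0F D) from ?_]
      · funext s
        exact nrow_sw_row hB _ _ (Xsw_b hB) (Xsw_a hB) (Dsw_b hB)
          (funext fun s => by rw [Dsw_a D]) s
      · conv_lhs => rw [show (j0F D) = j0F (Dsw D) from (j0F_sw hB).symm]
        rw [Dsw_b (Bad_sw hB), i0F_sw hB, j0F_sw hB]
    · have h1 : k ≠ i0F (Dsw D) := by rw [i0F_sw hB]; exact hka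
      have h2 : k ≠ j0F (Dsw D) := by rw [j0F_sw hB]; exact hkb
      rw [Dsw_other h1 h2, Dsw_other hka hkb]

lemma sum_Dsw_a (hB : Bad D) :
    ((n : ℤ) - 1 - (i0F D : ℕ)) + ∑ s, (Dsw D (i0F D) s : ℤ)
      = ((n : ℤ) - 1 - (j0F D : ℕ)) + ∑ s, (D (j0F D) s : ℤ) := by
  obtain ⟨ht1, htn, -, -, hab, ha, hb⟩ := bad_pack hB
  have h := Xsw_a hB n
  rw [if_neg (by omega)] at h
  rw [Xf, Xf, Np_total _ le_rfl, Np_total _ le_rfl] at h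
  have h' := congrArg (Nat.cast : ℕ → ℤ) h
  push_cast at h'
  have hia := (i0F D).isLt
  have hjb := (j0F D).isLt
  omega

lemma sum_Dsw_b (hB : Bad D) :
    ((n : ℤ) - 1 - (j0F D : ℕ)) + ∑ s, (Dsw D (j0F D) s : ℤ)
      = ((n : ℤ) - 1 - (i0F D : ℕ)) + ∑ s, (D (i0F D) s : ℤ) := by
  obtain ⟨ht1, htn, -, -, hab, ha, hb⟩ := bad_pack hB
  have h := Xsw_b hB n
  rw [if_neg (by omega)] at h
  rw [Xf, Xf, Np_total _ le_rfl, Np_total _ le_rfl] at h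
  have h' := congrArg (Nat.cast : ℕ → ℤ) h
  push_cast at h'
  have hia := (i0F D).isLt
  have hjb := (j0F D).isLt
  omega

lemma colsum_sw (hB : Bad D) (s : Fin n) :
    Dsw D (i0F D) s + Dsw D (j0F D) s = D (i0F D) s + D (j0F D) s := by
  obtain ⟨ht1, htn, -, -, hab, ha, hb⟩ := bad_pack hB
  obtain ⟨ha1, ha2⟩ := ha
  obtain ⟨hb1, hb2⟩ := hb
  have EA : Xf (Dsw D) (i0F D) ((s : ℕ) + 1) = Xf (Dsw D) (i0F D) s + Dsw D (i0F D) s := by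
    rw [Xf, Xf, Np_fin_succ, add_assoc]
  have EB : Xf (Dsw D) (j0F D) ((s : ℕ) + 1) = Xf (Dsw D) (j0F D) s + Dsw D (j0F D) s := by
    rw [Xf, Xf, Np_fin_succ, add_assoc]
  have ea : Xf D (i0F D) ((s : ℕ) + 1) = Xf D (i0F D) s + D (i0F D) s := by
    rw [Xf, Xf, Np_fin_succ, add_assoc]
  have eb : Xf D (j0F D) ((s : ℕ) + 1) = Xf D (j0F D) s + D (j0F D) s := by
    rw [Xf, Xf, Np_fin_succ, add_assoc]
  rw [Xsw_a hB, Xsw_a hB] at EA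
  rw [Xsw_b hB, Xsw_b hB] at EB
  rcases lt_trichotomy ((s : ℕ) + 1) (t0 D) with hc | hc | hc
  · rw [if_pos hc, if_pos (by omega)] at EA EB
    omega
  · have hsval : (s : ℕ) = t0 D - 1 := by omega
    rw [if_neg (by omega), if_pos (by omega)] at EA EB
    rw [hsval, show t0 D - 1 + 1 = t0 D from by omega] at EA EB ea eb
    omega
  · by_cases hs : (s : ℕ) < t0 D
    · omega
    · rw [if_neg (by omega), if_neg hs] at EA EB
      omega

end swap

set_option linter.unusedSectionVars false

/-! ### crossing from inversions, noncrossing families -/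

lemma inversion_bad {D : Fin n → Fin n → ℕ} {i i' : Fin n} (hii : i < i')
    (hend : Xf D i n < Xf D i' n) : Bad D := by
  have hne : {t : ℕ | Xf D i t < Xf D i' t}.Nonempty := ⟨n, hend⟩
  set t := sInf {t : ℕ | Xf D i t < Xf D i' t} with htdef
  have htS : Xf D i t < Xf D i' t := Nat.sInf_mem hne
  have ht0 : t ≠ 0 := by
    intro h
    rw [h] at htS
    unfold Xf at htS
    rw [Np_zero, Np_zero] at htS
    have := i.isLt; have := i'.isLt
    have hlt : (i : ℕ) < (i' : ℕ) := hii
    omega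
  have htn : t ≤ n := Nat.sInf_le hend
  have hprev : ¬ Xf D i (t - 1) < Xf D i' (t - 1) := by
    intro h
    have h2 : t ≤ t - 1 := Nat.sInf_le h
    omega
  refine ⟨t, Xf D i (t - 1), by omega, htn, i, i', ne_of_lt hii,
    ⟨le_rfl, Xf_mono D i (Nat.sub_le t 1)⟩, ⟨by omega, ?_⟩⟩
  have hmono : Xf D i (t - 1) ≤ Xf D i t := Xf_mono D i (Nat.sub_le t 1)
  omega

lemma noncross {D : Fin n → Fin n → ℕ} (hnb : ¬ Bad D) {i i' : Fin n} (hii : i < i') :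
    ∀ t, t ≤ n → Xf D i' t < Xf D i t ∧ (1 ≤ t → Xf D i' t < Xf D i (t - 1)) := by
  intro t
  induction t with
  | zero =>
    intro _
    refine ⟨?_, by omega⟩
    unfold Xf; rw [Np_zero, Np_zero]
    have := i.isLt; have := i'.isLt
    have hlt : (i : ℕ) < (i' : ℕ) := hii
    omega
  | succ t ih =>
    intro ht
    have ih' := ih (by omega)
    have key : Xf D i' (t + 1) < Xf D i t := by
      by_contra hc
      push_neg at hc
      exact hnb ⟨t + 1, Xf D i t, by omega, ht, i, i', ne_of_lt hii,
        ⟨by simpa using le_rfl, Xf_mono D i (by omega)⟩,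
        ⟨by simpa using le_of_lt ih'.1, hc⟩⟩
    exact ⟨lt_of_lt_of_le key (Xf_mono D i (by omega)), fun _ => by simpa using key⟩

lemma noBad_of_pairwise {D : Fin n → Fin n → ℕ}
    (hpw : ∀ (i i' : Fin n), i < i' → ∀ t, 1 ≤ t → t ≤ n → Xf D i' t < Xf D i (t - 1)) :
    ¬ Bad D := by
  rintro ⟨t, x, h1, h2, i, j, hij, hi, hj⟩
  rcases hij.lt_or_gt with h | h
  · have := hpw i j h t h1 h2; have := hi.1; have := hj.2; omega
  · have := hpw j i h t h1 h2; have := hj.1; have := hi.2; omega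

/-! ### words from count vectors -/

def wdN (d : Fin n → ℕ) (j : ℕ) : ℕ :=
  ((Finset.range n).filter (fun t => Np d (t + 1) ≤ j)).card

lemma wd_lt (d : Fin n → ℕ) {t : ℕ} (ht : t ≤ n) (j : ℕ) :
    wdN d j < t ↔ j < Np d t := by
  cases t with
  | zero => simp [Np_zero]
  | succ t =>
    constructor
    · intro h
      by_contra hc
      push_neg at hc
      have hsub : Finset.range (t + 1) ⊆ (Finset.range n).filter (fun t' => Np d (t' + 1) ≤ j) := by
        intro t' ht'
        simp only [Finset.mem_range] at ht'
        simp only [Finset.mem_filter, Finset.mem_range]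
        exact ⟨by omega, le_trans (Np_mono d (by omega)) hc⟩
      have := Finset.card_le_card hsub
      rw [Finset.card_range] at this
      unfold wdN at h
      omega
    · intro h
      have hsub : (Finset.range n).filter (fun t' => Np d (t' + 1) ≤ j) ⊆ Finset.range t := by
        intro t' ht'
        simp only [Finset.mem_filter, Finset.mem_range] at ht'
        simp only [Finset.mem_range]
        by_contra hc
        have := Np_mono d (show t + 1 ≤ t' + 1 by omega)
        omega
      have := Finset.card_le_card hsub
      rw [Finset.card_range] at this
      unfold wdN
      omega

lemma wd_mono (d : Fin n → ℕ) {j j' : ℕ} (h : j ≤ j') : wdN d j ≤ wdN d j' := by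
  apply Finset.card_le_card
  intro t ht
  simp only [Finset.mem_filter, Finset.mem_range] at ht ⊢
  omega

/-! ### counting helpers -/

lemma card_val_lt {m C : ℕ} (h : C ≤ m) :
    ((univ : Finset (Fin m)).filter fun j : Fin m => (j : ℕ) < C).card = C := by
  rw [← Finset.card_range C]
  apply Finset.card_bij (fun (j : Fin m) _ => (j : ℕ))
  · intro a ha; simp only [mem_filter, mem_univ, true_and] at ha; simpa using ha
  · intro a _ b _ hh; exact Fin.ext hh
  · intro x hx
    simp only [Finset.mem_range] at hx
    exact ⟨(⟨x, by omega⟩ : Fin m), by simp [hx], rfl⟩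

lemma card_val_band {m A B : ℕ} (hB : B ≤ m) :
    ((univ : Finset (Fin m)).filter fun j : Fin m => A ≤ (j : ℕ) ∧ (j : ℕ) < B).card = B - A := by
  rcases le_or_gt A B with h | h
  · rw [show B - A = (Finset.range B \ Finset.range A).card from ?_]
    · apply Finset.card_bij (fun (j : Fin m) _ => (j : ℕ))
      · intro a ha
        simp only [mem_filter, mem_univ, true_and] at ha
        simp only [Finset.mem_sdiff, Finset.mem_range]
        omega
      · intro a _ b _ hh; exact Fin.ext hh
      · intro x hx
        simp only [Finset.mem_sdiff, Finset.mem_range] at hx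
        exact ⟨(⟨x, by omega⟩ : Fin m), by simp only [mem_filter, mem_univ, true_and]; omega, rfl⟩
    · rw [Finset.card_sdiff_of_subset (Finset.range_subset_range.2 h), Finset.card_range, Finset.card_range]
  · rw [Finset.filter_false_of_mem (fun j _ => by omega), Finset.card_empty]
    omega

lemma downseg {m : ℕ} (S : Finset (Fin m))
    (hdc : ∀ j j' : Fin m, j ≤ j' → j' ∈ S → j ∈ S) (j : Fin m) :
    j ∈ S ↔ (j : ℕ) < S.card := by
  constructor
  · intro hj
    have hsub : (univ.filter fun j' : Fin m => (j' : ℕ) < (j : ℕ) + 1) ⊆ S := by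
      intro j' hj'
      simp only [mem_filter, mem_univ, true_and] at hj'
      exact hdc j' j (by omega) hj
    have := Finset.card_le_card hsub
    rw [card_val_lt (m := m) (C := (j : ℕ) + 1) (by have := j.isLt; omega)] at this
    omega
  · intro hj
    by_contra hc
    have hsub : S ⊆ univ.filter fun j' : Fin m => (j' : ℕ) < (j : ℕ) := by
      intro j' hj'
      simp only [mem_filter, mem_univ, true_and]
      by_contra hge
      exact hc (hdc j j' (by omega) hj')
    have := Finset.card_le_card hsub
    rw [card_val_lt (m := m) (C := (j : ℕ)) (le_of_lt j.isLt)] at this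
    omega

lemma nat_eq_of_lt_iff {A B m : ℕ} (h : ∀ t, t ≤ m → (A < t ↔ B < t))
    (hA : A < m) (hB : B < m) : A = B := by
  have h1 := (h (B + 1) (by omega)).mpr (by omega)
  have h2 := (h (A + 1) (by omega)).mp (by omega)
  omega


section tab
variable {lam : Fin n → ℕ}

def Dof (lam : Fin n → ℕ) (T : ∀ i : Fin n, Fin (lam i) → Fin n) : Fin n → Fin n → ℕ :=
  fun i s => ((univ : Finset (Fin (lam i))).filter fun j : Fin (lam i) => T i j = s).card

lemma Np_Dof (T : ∀ i : Fin n, Fin (lam i) → Fin n) (i : Fin n) (t : ℕ) :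
    Np (Dof lam T i) t
      = ((univ : Finset (Fin (lam i))).filter fun j : Fin (lam i) => (T i j : ℕ) < t).card := by
  have h := Finset.card_eq_sum_card_fiberwise (f := fun j : Fin (lam i) => T i j)
      (s := (univ : Finset (Fin (lam i))).filter fun j : Fin (lam i) => (T i j : ℕ) < t)
      (t := (univ : Finset (Fin n)).filter (fun s : Fin n => (s : ℕ) < t))
      (fun j hj => by simp only [Finset.mem_coe, mem_filter, mem_univ, true_and] at hj ⊢; exact hj)
  rw [Np, h]
  apply sum_congr rfl
  intro s hs
  simp only [mem_filter, mem_univ, true_and] at hs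
  rw [Dof]
  congr 1
  ext j
  simp only [mem_filter, mem_univ, true_and]
  constructor
  · intro h'; exact ⟨by rw [h']; exact hs, h'⟩
  · intro h'; exact h'.2

lemma Dof_total (T : ∀ i : Fin n, Fin (lam i) → Fin n) (i : Fin n) :
    ∑ s, Dof lam T i s = lam i := by
  have h := Finset.card_eq_sum_card_fiberwise (f := fun j : Fin (lam i) => T i j)
      (s := (univ : Finset (Fin (lam i)))) (t := (univ : Finset (Fin n)))
      (fun j _ => mem_univ _)
  have h2 : ∑ s, Dof lam T i s = (univ : Finset (Fin (lam i))).card := by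
    rw [h]
    apply sum_congr rfl
    intro s _
    simp only [Dof]
  rw [h2]
  simp

lemma ssyt_count {T : ∀ i : Fin n, Fin (lam i) → Fin n} (hT : IsSSYT lam T)
    (hlam : Antitone lam) {i i' : Fin n} (hii : i < i') {t : ℕ} (ht : 1 ≤ t) :
    Np (Dof lam T i') t ≤ Np (Dof lam T i) (t - 1) := by
  rw [Np_Dof, Np_Dof]
  have hle : lam i' ≤ lam i := hlam hii.le
  apply Finset.card_le_card_of_injOn
    (fun j' : Fin (lam i') => (⟨(j' : ℕ), lt_of_lt_of_le j'.isLt hle⟩ : Fin (lam i)))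
  · intro j' hj'
    simp only [Finset.mem_coe, mem_filter, mem_univ, true_and] at hj' ⊢
    have hcol := hT.2 i i' ⟨(j' : ℕ), lt_of_lt_of_le j'.isLt hle⟩ j' hii rfl
    have hcol' : (T i ⟨(j' : ℕ), lt_of_lt_of_le j'.isLt hle⟩ : ℕ) < (T i' j' : ℕ) := hcol
    omega
  · intro a _ b _ hab
    exact Fin.ext (by simpa [Fin.ext_iff] using hab)

lemma ssyt_noBad {T : ∀ i : Fin n, Fin (lam i) → Fin n} (hT : IsSSYT lam T)
    (hlam : Antitone lam) : ¬ Bad (Dof lam T) := by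
  apply noBad_of_pairwise
  intro i i' hii t ht htn
  have h := ssyt_count hT hlam hii ht (t := t)
  rw [Xf, Xf]
  have h1 : (i : ℕ) < i' := hii
  have := i'.isLt
  omega

def Tof [NeZero n] (lam : Fin n → ℕ) (D : Fin n → Fin n → ℕ) :
    ∀ i : Fin n, Fin (lam i) → Fin n :=
  fun i j => ⟨min (wdN (D i) (j : ℕ)) (n - 1), by have := NeZero.pos n; omega⟩

lemma Tof_val [NeZero n] {D : Fin n → Fin n → ℕ} {i : Fin n}
    (hrow : Np (D i) n = lam i) (j : Fin (lam i)) :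
    ((Tof lam D i j : ℕ)) = wdN (D i) (j : ℕ) := by
  have h : wdN (D i) (j : ℕ) < n := (wd_lt (D i) le_rfl (j : ℕ)).2 (by rw [hrow]; exact j.isLt)
  simp only [Tof]
  omega

lemma Dof_Tof [NeZero n] {D : Fin n → Fin n → ℕ} (hrow : ∀ i, Np (D i) n = lam i) :
    Dof lam (Tof lam D) = D := by
  funext i s
  rw [Dof]
  have hfil : ((univ : Finset (Fin (lam i))).filter fun j : Fin (lam i) => Tof lam D i j = s)
      = (univ : Finset (Fin (lam i))).filter fun j : Fin (lam i) =>
          Np (D i) (s : ℕ) ≤ (j : ℕ) ∧ (j : ℕ) < Np (D i) ((s : ℕ) + 1) := by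
    ext j
    simp only [mem_filter, mem_univ, true_and]
    rw [Fin.ext_iff, Tof_val (hrow i)]
    constructor
    · intro h
      have h1 : ¬ wdN (D i) (j : ℕ) < (s : ℕ) := by omega
      rw [wd_lt (D i) (le_of_lt s.isLt)] at h1
      have h2 : wdN (D i) (j : ℕ) < (s : ℕ) + 1 := by omega
      rw [wd_lt (D i) s.isLt] at h2
      exact ⟨by omega, h2⟩
    · rintro ⟨h1, h2⟩
      have h1' : ¬ ((j : ℕ) < Np (D i) (s : ℕ)) := by omega
      rw [← wd_lt (D i) (le_of_lt s.isLt)] at h1'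
      rw [← wd_lt (D i) s.isLt] at h2
      omega
  rw [hfil, card_val_band (m := lam i) (by rw [← hrow i]; exact Np_mono (D i) s.isLt)]
  have := Np_fin_succ (D i) s
  omega

lemma Tof_Dof [NeZero n] {T : ∀ i : Fin n, Fin (lam i) → Fin n} (hT : IsSSYT lam T) :
    Tof lam (Dof lam T) = T := by
  funext i j
  apply Fin.ext
  have hrow : Np (Dof lam T i) n = lam i := by
    rw [Np_total _ le_rfl]; exact Dof_total T i
  rw [Tof_val hrow]
  have hiff : ∀ t, t ≤ n → ((T i j : ℕ) < t ↔ (j : ℕ) < Np (Dof lam T i) t) := by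
    intro t ht
    have hds := downseg ((univ : Finset (Fin (lam i))).filter fun j' : Fin (lam i) => (T i j' : ℕ) < t)
      (fun a b hab hbS => by
        simp only [mem_filter, mem_univ, true_and] at hbS ⊢
        have h := hT.1 i a b hab
        have h' : (T i a : ℕ) ≤ (T i b : ℕ) := h
        omega) j
    simp only [mem_filter, mem_univ, true_and] at hds
    rw [Np_Dof]
    exact hds
  have hW : ∀ t, t ≤ n → (wdN (Dof lam T i) (j : ℕ) < t ↔ (j : ℕ) < Np (Dof lam T i) t) :=
    fun t ht => wd_lt _ ht _
  apply nat_eq_of_lt_iff (m := n) (fun t ht => (hW t ht).trans (hiff t ht).symm)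
  · exact (hW n le_rfl).2 (by rw [hrow]; exact j.isLt)
  · exact (T i j).isLt

lemma Tof_ssyt [NeZero n] {D : Fin n → Fin n → ℕ} (hlam : Antitone lam)
    (hrow : ∀ i, Np (D i) n = lam i) (hnb : ¬ Bad D) : IsSSYT lam (Tof lam D) := by
  constructor
  · intro i j j' hjj'
    show Tof lam D i j ≤ Tof lam D i j'
    rw [Fin.le_def, Tof_val (hrow i), Tof_val (hrow i)]
    exact wd_mono (D i) hjj'
  · have adj : ∀ (i i' : Fin n), (i : ℕ) + 1 = (i' : ℕ) → ∀ jv, jv < lam i' →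
        wdN (D i) jv < wdN (D i') jv := by
      intro i i' hadj jv hjv
      have hii : i < i' := by rw [Fin.lt_def]; omega
      set t' := wdN (D i') jv with ht'
      have ht'n : t' < n := (wd_lt (D i') le_rfl jv).2 (by rw [hrow i']; exact hjv)
      have h1 : jv < Np (D i') (t' + 1) :=
        (wd_lt (D i') (by omega) jv).1 (by omega)
      have h2 := (noncross hnb hii (t' + 1) (by omega)).2 (by omega)
      simp only [Nat.add_sub_cancel] at h2
      unfold Xf at h2
      have hi := i.isLt; have hi' := i'.isLt
      rw [wd_lt (D i) (by omega : t' ≤ n)]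
      omega
    have gen : ∀ g : ℕ, ∀ (i i' : Fin n), (i : ℕ) + g + 1 = (i' : ℕ) → ∀ jv, jv < lam i' →
        wdN (D i) jv < wdN (D i') jv := by
      intro g
      induction g with
      | zero => intro i i' h jv hjv; exact adj i i' (by omega) jv hjv
      | succ g ih =>
        intro i i' h jv hjv
        have hmidlt : (i : ℕ) + g + 1 < n := by have := i'.isLt; omega
        have h1 := ih i ⟨(i : ℕ) + g + 1, hmidlt⟩ rfl jv
          (lt_of_lt_of_le hjv (hlam (by rw [Fin.le_def]; simp; omega)))
        have h2 := adj ⟨(i : ℕ) + g + 1, hmidlt⟩ i' (by simp; omega) jv hjv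
        omega
    intro i i' j j' hii' hval
    rw [Fin.lt_def, Tof_val (hrow i), Tof_val (hrow i')]
    have hlt : (i : ℕ) < (i' : ℕ) := hii'
    rw [hval]
    exact gen ((i' : ℕ) - (i : ℕ) - 1) i i' (by omega) (j' : ℕ) j'.isLt

lemma perm_one {D : Fin n → Fin n → ℕ} (hlam : Antitone lam) (σ : Equiv.Perm (Fin n))
    (hnb : ¬ Bad D)
    (hsum : ∀ i : Fin n, (∑ s, (D i s : ℤ)) = (lam (σ i) : ℤ) + (i : ℕ) - (σ i : ℕ)) :
    σ = 1 := by
  by_contra hne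
  have hmv : ∃ i, σ i ≠ i := by
    by_contra h
    push_neg at h
    exact hne (Equiv.ext h)
  classical
  set M := (univ : Finset (Fin n)).filter fun i => σ i ≠ i with hM
  have hMne : M.Nonempty := ⟨hmv.choose, by simp [hM, hmv.choose_spec]⟩
  set i := M.min' hMne with hi
  have hiM : σ i ≠ i := by
    have := M.min'_mem hMne
    simp only [hM, mem_filter, mem_univ, true_and] at this
    exact this
  have hfix : ∀ k : Fin n, k < i → σ k = k := by
    intro k hk
    by_contra hkne
    exact absurd hk (not_lt.2 (M.min'_le k (by simp [hM, hkne])))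
  have hgt : i < σ i := by
    rcases lt_trichotomy (σ i) i with h | h | h
    · exact absurd (σ.injective (hfix (σ i) h)) hiM
    · exact absurd h hiM
    · exact h
  have hσi' : σ (σ.symm i) = i := σ.apply_symm_apply i
  have hne' : σ.symm i ≠ i := by
    intro h; rw [h] at hσi'; exact hiM hσi'
  have hii' : i < σ.symm i := by
    rcases lt_trichotomy (σ.symm i) i with h | h | h
    · exact absurd ((hfix _ h).symm.trans hσi') hne'
    · exact absurd h hne'
    · exact h
  have hend : Xf D i n < Xf D (σ.symm i) n := by
    have e1 : Xf D i n = (n - 1 - (i : ℕ)) + ∑ s, D i s := by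
      rw [Xf, Np_total _ le_rfl]
    have e2 : Xf D (σ.symm i) n = (n - 1 - ((σ.symm i : ℕ))) + ∑ s, D (σ.symm i) s := by
      rw [Xf, Np_total _ le_rfl]
    have c1 := congrArg (Nat.cast : ℕ → ℤ) e1
    have c2 := congrArg (Nat.cast : ℕ → ℤ) e2
    push_cast at c1 c2
    have s1 := hsum i
    have s2 := hsum (σ.symm i)
    rw [hσi'] at s2
    have hlam' : lam (σ i) ≤ lam i := hlam (le_of_lt hgt)
    have hb1 := i.isLt; have hb2 := (σ.symm i).isLt; have hb3 := (σ i).isLt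
    have hii'v : (i : ℕ) < (σ.symm i : ℕ) := hii'
    have hgtv : (i : ℕ) < (σ i : ℕ) := hgt
    omega
  exact hnb (inversion_bad hii' hend)

end tab

/-! ### the two sides as finite sums -/

open scoped Classical

def Ek (n : ℕ) (k : ℤ) : Finset (Fin n → ℕ) :=
  if 0 ≤ k then Finset.Nat.antidiagonalTuple n k.toNat else ∅

lemma mem_Ek {k : ℤ} {d : Fin n → ℕ} : d ∈ Ek n k ↔ (∑ s, (d s : ℤ)) = k := by
  have hc : (∑ s, (d s : ℤ)) = ((∑ s, d s : ℕ) : ℤ) := by push_cast; rfl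
  rw [Ek]
  split_ifs with h
  · rw [Finset.Nat.mem_antidiagonalTuple]
    omega
  · simp only [notMem_empty, false_iff]
    intro he
    omega

noncomputable def mn (D : Fin n → Fin n → ℕ) : MvPolynomial (Fin n) ℤ :=
  ∏ i, ∏ s, X s ^ D i s

noncomputable def trm (p : Σ _ : Equiv.Perm (Fin n), Fin n → Fin n → ℕ) :
    MvPolynomial (Fin n) ℤ :=
  ((Equiv.Perm.sign p.1 : ℤˣ) : ℤ) • mn p.2

noncomputable def PF (lam : Fin n → ℕ) (σ : Equiv.Perm (Fin n)) : Finset (Fin n → Fin n → ℕ) :=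
  Fintype.piFinset (fun i => Ek n ((lam (σ i) : ℤ) + (i : ℤ) - (σ i : ℤ)))

noncomputable def SG (lam : Fin n → ℕ) :
    Finset (Σ _ : Equiv.Perm (Fin n), Fin n → Fin n → ℕ) :=
  univ.sigma (fun σ => PF lam σ)

lemma mem_SG {lam : Fin n → ℕ} {p : Σ _ : Equiv.Perm (Fin n), Fin n → Fin n → ℕ} :
    p ∈ SG lam ↔ ∀ i, (∑ s, (p.2 i s : ℤ)) = (lam (p.1 i) : ℤ) + (i : ℤ) - (p.1 i : ℤ) := by
  rw [SG, Finset.mem_sigma, PF, Fintype.mem_piFinset]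
  simp only [mem_univ, true_and]
  exact forall_congr' fun i => mem_Ek

lemma completeHomog_eq (k : ℤ) :
    completeHomog n k = ∑ d ∈ Ek n k, ∏ s, (X s : MvPolynomial (Fin n) ℤ) ^ d s := by
  rw [completeHomog, Ek]
  split_ifs with h
  · letI : Fintype {d : Fin n → ℕ // ∑ i, d i = k.toNat} :=
      Fintype.subtype (Finset.Nat.antidiagonalTuple n k.toNat)
        (fun d => Finset.Nat.mem_antidiagonalTuple)
    rw [finsum_eq_sum_of_fintype]
    exact (Finset.sum_subtype (Finset.Nat.antidiagonalTuple n k.toNat)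
      (fun d => Finset.Nat.mem_antidiagonalTuple)
      (fun d => ∏ s, (X s : MvPolynomial (Fin n) ℤ) ^ d s)).symm
  · rw [Finset.sum_empty]

noncomputable def TT (lam : Fin n → ℕ) : Finset (∀ i : Fin n, Fin (lam i) → Fin n) :=
  univ.filter (IsSSYT lam)

lemma mem_TT {lam : Fin n → ℕ} {T : ∀ i : Fin n, Fin (lam i) → Fin n} :
    T ∈ TT lam ↔ IsSSYT lam T := by
  rw [TT, Finset.mem_filter]
  simp

lemma schur_eq (lam : Fin n → ℕ) :
    schurPoly n lam = ∑ T ∈ TT lam, ∏ i, ∏ j, (X (T i j) : MvPolynomial (Fin n) ℤ) := by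
  rw [schurPoly]
  letI : Fintype {T : ∀ i : Fin n, Fin (lam i) → Fin n // IsSSYT lam T} := Subtype.fintype _
  rw [finsum_eq_sum_of_fintype]
  exact (Finset.sum_subtype (TT lam) (fun T => mem_TT)
    (fun T => ∏ i, ∏ j, (X (T i j) : MvPolynomial (Fin n) ℤ))).symm

lemma det_eq (lam : Fin n → ℕ) :
    (Matrix.of fun i j : Fin n =>
        completeHomog n ((lam i : ℤ) + (j : ℤ) - (i : ℤ))).det = ∑ p ∈ SG lam, trm p := by
  rw [Matrix.det_apply]
  have hterm : ∀ σ : Equiv.Perm (Fin n),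
      Equiv.Perm.sign σ • ∏ i, (Matrix.of fun i j : Fin n =>
        completeHomog n ((lam i : ℤ) + (j : ℤ) - (i : ℤ))) (σ i) i
      = ∑ D ∈ PF lam σ, trm ⟨σ, D⟩ := by
    intro σ
    have h1 : (∏ i, (Matrix.of fun i j : Fin n =>
        completeHomog n ((lam i : ℤ) + (j : ℤ) - (i : ℤ))) (σ i) i)
        = ∏ i, ∑ d ∈ Ek n ((lam (σ i) : ℤ) + (i : ℤ) - (σ i : ℤ)),
            ∏ s, (X s : MvPolynomial (Fin n) ℤ) ^ d s := by
      apply prod_congr rfl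
      intro i _
      rw [Matrix.of_apply, completeHomog_eq]
    rw [h1, Finset.prod_univ_sum, Finset.smul_sum]
    rfl
  rw [Finset.sum_congr rfl (fun σ _ => hterm σ), SG,
    Finset.sum_sigma' univ (fun σ => PF lam σ) (fun σ D => trm ⟨σ, D⟩)]

/-! ### the involution kills crossing configurations -/

lemma prod_split_pair {M : Type*} [CommMonoid M] (f : Fin n → M) (a b : Fin n) (hab : a ≠ b) :
    ∏ k, f k = f a * f b * ∏ k ∈ (univ.erase a).erase b, f k := by
  rw [← Finset.mul_prod_erase univ f (mem_univ a),
    ← Finset.mul_prod_erase (univ.erase a) f (Finset.mem_erase.2 ⟨Ne.symm hab, mem_univ b⟩),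
    ← mul_assoc]

lemma mn_sw [NeZero n] {D : Fin n → Fin n → ℕ} (hB : Bad D) : mn (Dsw D) = mn D := by
  obtain ⟨-, -, -, -, hab, -, -⟩ := bad_pack hB
  rw [mn, mn,
    prod_split_pair (fun k => ∏ s, (X s : MvPolynomial (Fin n) ℤ) ^ Dsw D k s) (i0F D) (j0F D) hab,
    prod_split_pair (fun k => ∏ s, (X s : MvPolynomial (Fin n) ℤ) ^ D k s) (i0F D) (j0F D) hab]
  congr 1
  · rw [← Finset.prod_mul_distrib, ← Finset.prod_mul_distrib]
    apply prod_congr rfl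
    intro s _
    rw [← pow_add, ← pow_add, colsum_sw hB s]
  · apply prod_congr rfl
    intro k hk
    rw [Finset.mem_erase, Finset.mem_erase] at hk
    rw [Dsw_other hk.2.1 hk.1]

lemma badsum [NeZero n] (lam : Fin n → ℕ) :
    ∑ p ∈ (SG lam).filter (fun p => Bad p.2), trm p = 0 := by
  refine Finset.sum_involution
    (fun p _ => (⟨p.1 * Equiv.swap (i0F p.2) (j0F p.2), Dsw p.2⟩ :
      Σ _ : Equiv.Perm (Fin n), Fin n → Fin n → ℕ))
    ?_ ?_ ?_ ?_
  · intro p hp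
    rw [Finset.mem_filter] at hp
    obtain ⟨-, hB⟩ := hp
    obtain ⟨-, -, -, -, hab, -, -⟩ := bad_pack hB
    have hs : ((Equiv.Perm.sign (p.1 * Equiv.swap (i0F p.2) (j0F p.2)) : ℤˣ) : ℤ)
        = -((Equiv.Perm.sign p.1 : ℤˣ) : ℤ) := by
      rw [Equiv.Perm.sign_mul, Equiv.Perm.sign_swap hab]
      simp
    rw [trm, trm]
    simp only
    rw [hs, mn_sw hB, neg_smul]
    exact add_neg_cancel _
  · intro p hp _
    rw [Finset.mem_filter] at hp
    obtain ⟨-, hB⟩ := hp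
    obtain ⟨-, -, -, -, hab, -, -⟩ := bad_pack hB
    intro heq
    have h1 := congrArg Sigma.fst heq
    simp only at h1
    have h2 : (p.1 * Equiv.swap (i0F p.2) (j0F p.2)) (i0F p.2) = p.1 (i0F p.2) := by rw [h1]
    rw [Equiv.Perm.mul_apply, Equiv.swap_apply_left] at h2
    exact hab (p.1.injective h2).symm
  · intro p hp
    rw [Finset.mem_filter] at hp ⊢
    obtain ⟨hSG, hB⟩ := hp
    obtain ⟨-, -, -, -, hab, -, -⟩ := bad_pack hB
    rw [mem_SG] at hSG
    refine ⟨?_, Bad_sw hB⟩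
    rw [mem_SG]
    intro i
    by_cases hia : i = i0F p.2
    · subst hia
      simp only [Equiv.Perm.mul_apply, Equiv.swap_apply_left]
      have h1 := sum_Dsw_a hB
      have h2 := hSG (j0F p.2)
      have hb1 := (i0F p.2).isLt
      have hb2 := (j0F p.2).isLt
      omega
    · by_cases hib : i = j0F p.2
      · subst hib
        simp only [Equiv.Perm.mul_apply, Equiv.swap_apply_right]
        have h1 := sum_Dsw_b hB
        have h2 := hSG (i0F p.2)
        have hb1 := (i0F p.2).isLt
        have hb2 := (j0F p.2).isLt
        omega
      · simp only [Equiv.Perm.mul_apply, Equiv.swap_apply_of_ne_of_ne hia hib]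
        rw [show Dsw p.2 i = p.2 i from Dsw_other hia hib]
        exact hSG i
  · intro p hp
    rw [Finset.mem_filter] at hp
    obtain ⟨-, hB⟩ := hp
    refine Sigma.ext ?_ (heq_of_eq (Dsw_invol hB))
    simp only
    rw [i0F_sw hB, j0F_sw hB, mul_assoc, Equiv.swap_mul_self, mul_one]

/-! ### the noncrossing configurations are the tableaux -/

lemma prod_row {m : ℕ} (w : Fin m → Fin n) :
    (∏ j, (X (w j) : MvPolynomial (Fin n) ℤ))
      = ∏ s : Fin n, (X s : MvPolynomial (Fin n) ℤ)
          ^ ((univ : Finset (Fin m)).filter fun j : Fin m => w j = s).card := by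
  rw [← Finset.prod_fiberwise_of_maps_to (fun j (_ : j ∈ univ) => mem_univ (w j))
    (fun j => (X (w j) : MvPolynomial (Fin n) ℤ))]
  apply prod_congr rfl
  intro s _
  calc (∏ j ∈ univ.filter fun j : Fin m => w j = s, (X (w j) : MvPolynomial (Fin n) ℤ))
      = ∏ j ∈ univ.filter fun j : Fin m => w j = s, (X s : MvPolynomial (Fin n) ℤ) :=
        prod_congr rfl (fun j hj => by rw [(Finset.mem_filter.1 hj).2])
    _ = _ := Finset.prod_const _

lemma goodsum [NeZero n] (lam : Fin n → ℕ) (hlam : Antitone lam) :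
    ∑ p ∈ (SG lam).filter (fun p => ¬ Bad p.2), trm p
      = ∑ T ∈ TT lam, ∏ i, ∏ j, (X (T i j) : MvPolynomial (Fin n) ℤ) := by
  have hrowlam : ∀ p : Σ _ : Equiv.Perm (Fin n), Fin n → Fin n → ℕ,
      p ∈ (SG lam).filter (fun p => ¬ Bad p.2) → (p.1 = 1 ∧ ∀ i, Np (p.2 i) n = lam i) := by
    intro p hp
    rw [Finset.mem_filter] at hp
    obtain ⟨hSG, hnb⟩ := hp
    rw [mem_SG] at hSG
    have h1 : p.1 = 1 := perm_one hlam p.1 hnb hSG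
    refine ⟨h1, fun i => ?_⟩
    have h2 := hSG i
    rw [h1] at h2
    simp only [Equiv.Perm.one_apply] at h2
    have h3 : (∑ s, (p.2 i s : ℤ)) = ((∑ s, p.2 i s : ℕ) : ℤ) := by push_cast; rfl
    rw [Np_total _ le_rfl]
    omega
  symm
  refine Finset.sum_nbij' (fun T => (⟨1, Dof lam T⟩ : Σ _ : Equiv.Perm (Fin n), Fin n → Fin n → ℕ))
    (fun p => Tof lam p.2) ?_ ?_ ?_ ?_ ?_
  · intro T hT
    rw [mem_TT] at hT
    rw [Finset.mem_filter]
    constructor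
    · rw [mem_SG]
      intro i
      simp only [Equiv.Perm.one_apply]
      have h1 := Dof_total (lam := lam) T i
      have h2 : (∑ s, (Dof lam T i s : ℤ)) = ((∑ s, Dof lam T i s : ℕ) : ℤ) := by push_cast; rfl
      omega
    · exact ssyt_noBad hT hlam
  · intro p hp
    obtain ⟨h1, hrow⟩ := hrowlam p hp
    rw [Finset.mem_filter] at hp
    rw [mem_TT]
    exact Tof_ssyt hlam hrow hp.2
  · intro T hT
    rw [mem_TT] at hT
    exact Tof_Dof hT
  · intro p hp
    obtain ⟨h1, hrow⟩ := hrowlam p hp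
    exact Sigma.ext h1.symm (heq_of_eq (Dof_Tof hrow))
  · intro T hT
    rw [trm]
    simp only [Equiv.Perm.sign_one, Units.val_one, one_smul, mn]
    apply prod_congr rfl
    intro i _
    exact prod_row (T i)

end JT


open scoped Classical in
/-- Jacobi–Trudi identity: for `n ≥ 1` and a partition
`λ_1 ≥ … ≥ λ_n ≥ 0`, in `ℤ[x_1,…,x_n]`, `S_λ = det (h_{λ_i + j - i})_{1 ≤ i,j ≤ n}`. -/
theorem jacobi_trudi (n : ℕ) (hn : 1 ≤ n) (lam : Fin n → ℕ) (hlam : Antitone lam) :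
    schurPoly n lam
    = (Matrix.of fun i j : Fin n =>
        completeHomog n ((lam i : ℤ) + (j : ℤ) - (i : ℤ))).det := by
  haveI : NeZero n := ⟨by omega⟩
  rw [JT.schur_eq lam, JT.det_eq lam,
    ← Finset.sum_filter_add_sum_filter_not (JT.SG lam) (fun p => JT.Bad p.2) JT.trm,
    JT.badsum lam, zero_add, JT.goodsum lam hlam]
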